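/- For g ≥ 3, the element ρ of the presented group G_E(g) is not equal to the identity; hence ρ has order exactly 2 in G_E(g). In particular, for g odd the element (t_1⋯t_{g−1})^g of G_E(g) is a nontrivial central element of order 2. -/

import Mathlib

open FreeGroup in
/-- Relations (E1)-(E5). The generator `some i` is `t_{i+1}` and `none` is `ρ`. -/
def relsE (g : ℕ) : Set (FreeGroup (Option (Fin (g-1)))) :=
  -- (E1)
  {r | ∃ j k : Fin (g-1), ((j : ℕ) + 1 < k ∨ (k : ℕ) + 1 < j) ∧
        r = of (some k) * of (some j) * (of (some j) * of (some k))⁻¹} ∪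
  -- (E2)
  {r | ∃ j k : Fin (g-1), (j : ℕ) + 1 = k ∧
        r = of (some j) * of (some k) * of (some j) *
            (of (some k) * of (some j) * of (some k))⁻¹} ∪
  -- (E3)
  {(List.ofFn (fun i : Fin (g-1) => of (some i : Option (Fin (g-1))))).prod ^ g *
      (if Odd g then (of (none : Option (Fin (g-1))))⁻¹ else 1)} ∪
  -- (E4)
  {of (none : Option (Fin (g-1))) ^ 2} ∪
  -- (E5)  ρ t_j ρ = t_j
  {r | ∃ j : Fin (g-1), r = of none * of (some j) * of none * (of (some j))⁻¹}

/-- `G_E(g)`, a presentation of the group `M^{h+}(N_g)`. -/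
def GE (g : ℕ) : Type := PresentedGroup (relsE g)

instance (g : ℕ) : Group (GE g) := by unfold GE; infer_instance

/-- The generator `t_{i+1}` of `G_E(g)`. -/
def GE.t {g : ℕ} (i : Fin (g-1)) : GE g := PresentedGroup.of (rels := relsE g) (some i)

/-- The generator `ρ` of `G_E(g)`. -/
def GE.ρ (g : ℕ) : GE g := PresentedGroup.of (rels := relsE g) none

/-- Any relator maps to `1` in the presented group. -/
lemma relsE_mk_eq_one {g : ℕ} {r : FreeGroup (Option (Fin (g-1)))} (hr : r ∈ relsE g) :
    PresentedGroup.mk (relsE g) r = 1 :=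
  (QuotientGroup.eq_one_iff r).mpr (Subgroup.subset_normalClosure hr)

lemma GE.rho_sq (g : ℕ) : GE.ρ g ^ 2 = 1 := by
  have h : (FreeGroup.of (none : Option (Fin (g-1)))) ^ 2 ∈ relsE g := by
    unfold relsE; left; right; rfl
  have := relsE_mk_eq_one h
  simp only [map_pow] at this
  exact this

lemma GE.rho_comm (g : ℕ) (j : Fin (g-1)) : GE.t j * GE.ρ g = GE.ρ g * GE.t j := by
  have h : FreeGroup.of (none : Option (Fin (g-1))) * FreeGroup.of (some j) * FreeGroup.of none *
      (FreeGroup.of (some j))⁻¹ ∈ relsE g := by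
    unfold relsE; right; exact ⟨j, rfl⟩
  have h1 := relsE_mk_eq_one h
  simp only [map_mul, map_inv] at h1
  have h2 : GE.ρ g * GE.t j * GE.ρ g = GE.t j := by
    have := mul_inv_eq_one.mp h1
    exact this
  have hsq := GE.rho_sq g
  calc GE.t j * GE.ρ g = GE.ρ g * GE.t j * GE.ρ g * GE.ρ g := by rw [h2]
    _ = GE.ρ g * GE.t j * (GE.ρ g ^ 2) := by rw [sq, mul_assoc]
    _ = GE.ρ g * GE.t j := by rw [hsq, mul_one]

lemma GE.rho_central (g : ℕ) : GE.ρ g ∈ Subgroup.center (GE g) := by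
  rw [Subgroup.mem_center_iff]
  intro x
  have hx : x ∈ Subgroup.centralizer {GE.ρ g} := by
    refine PresentedGroup.generated_by (relsE g) _ (fun o => ?_) x
    apply Subgroup.mem_centralizer_iff.mpr
    rintro h rfl
    cases o with
    | none => rfl
    | some j => exact (GE.rho_comm g j).symm
  exact (Subgroup.mem_centralizer_iff.mp hx (GE.ρ g) rfl).symm

lemma GE.prod_pow (g : ℕ) (hodd : Odd g) :
    (List.ofFn (fun i : Fin (g-1) => GE.t i)).prod ^ g = GE.ρ g := by
  have h : (List.ofFn (fun i : Fin (g-1) =>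
        FreeGroup.of (some i : Option (Fin (g-1))))).prod ^ g *
      (if Odd g then (FreeGroup.of (none : Option (Fin (g-1))))⁻¹ else 1) ∈ relsE g := by
    unfold relsE; left; left; right; rfl
  have h1 := relsE_mk_eq_one h
  rw [if_pos hodd] at h1
  simp only [map_mul, map_inv, map_pow, map_list_prod, List.map_ofFn] at h1
  have h2 : (List.ofFn (fun i : Fin (g-1) => GE.t i)) =
      List.ofFn ((PresentedGroup.mk (relsE g)) ∘
        fun i : Fin (g-1) => FreeGroup.of (some i : Option (Fin (g-1)))) := rfl
  rw [h2]
  exact mul_inv_eq_one.mp h1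

/-- `ρ ≠ 1` in `G_E(g)`, so `ρ` has order exactly `2`; in particular for `g` odd,
`(t_1 ⋯ t_{g-1})^g` is a nontrivial central element of order `2` in `G_E(g)`. -/
theorem stmt16 (g : ℕ) (hg : 3 ≤ g) :
    GE.ρ g ≠ 1 ∧ orderOf (GE.ρ g) = 2 ∧
    (Odd g →
      (List.ofFn (fun i : Fin (g-1) => GE.t i)).prod ^ g ∈ Subgroup.center (GE g) ∧
      (List.ofFn (fun i : Fin (g-1) => GE.t i)).prod ^ g ≠ 1 ∧
      orderOf ((List.ofFn (fun i : Fin (g-1) => GE.t i)).prod ^ g) = 2) := by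
  have hpos : 0 < (g-1)*g := Nat.mul_pos (by omega) (by omega)
  set n : ℕ := 2 * ((g-1)*g) with hn
  haveI : NeZero n := ⟨by omega⟩
  -- the detecting homomorphism
  set c : Multiplicative (ZMod n) :=
    Multiplicative.ofAdd (if Odd g then (1 : ZMod n) else 0) with hc
  set y : Multiplicative (ZMod n) :=
    Multiplicative.ofAdd ((((g-1)*g : ℕ)) : ZMod n) with hy
  set f : Option (Fin (g-1)) → Multiplicative (ZMod n) :=
    fun o => o.elim y (fun _ => c) with hf
  have hy2 : y ^ 2 = 1 := by
    rw [hy, ← ofAdd_nsmul]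
    have : (2 : ℕ) • ((((g-1)*g : ℕ)) : ZMod n) = ((n : ℕ) : ZMod n) := by
      push_cast [hn]; ring
    rw [this, ZMod.natCast_self]; rfl
  have hcg : c ^ ((g-1) * g) = if Odd g then y else 1 := by
    by_cases ho : Odd g
    · rw [if_pos ho, hc, if_pos ho, ← ofAdd_nsmul, hy]
      congr 1
      push_cast
      simp [nsmul_eq_mul]
    · rw [if_neg ho, hc, if_neg ho]
      simp
  have hrels : ∀ r ∈ relsE g, (FreeGroup.lift f) r = 1 := by
    intro r hr
    rcases hr with ((((⟨j, k, _, rfl⟩ | ⟨j, k, _, rfl⟩) | hr) | hr) | ⟨j, rfl⟩)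
    · simp only [map_mul, map_inv, FreeGroup.lift_apply_of]
      simp only [hf, Option.elim]
      group
    · simp only [map_mul, map_inv, FreeGroup.lift_apply_of]
      simp only [hf, Option.elim]
      group
    · rw [Set.mem_singleton_iff] at hr
      subst hr
      simp only [map_mul, map_pow, map_list_prod, List.map_ofFn]
      have hl : List.ofFn ((FreeGroup.lift f) ∘
          fun i : Fin (g-1) => FreeGroup.of (some i : Option (Fin (g-1)))) =
          List.replicate (g-1) c := by
        rw [← List.ofFn_const]
        congr 1
        funext i
        simp [hf]
      rw [hl, List.prod_replicate, ← pow_mul, hcg]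
      by_cases ho : Odd g
      · rw [if_pos ho, if_pos ho]
        simp [hf]
      · rw [if_neg ho, if_neg ho]
        simp
    · rw [Set.mem_singleton_iff] at hr
      subst hr
      simpa [hf] using hy2
    · -- E5 : y * c * y * c⁻¹ = 1
      simp only [map_mul, map_inv, FreeGroup.lift_apply_of]
      have : f none * f (some j) * f none * (f (some j))⁻¹ = y ^ 2 := by
        show y * c * y * c⁻¹ = y ^ 2
        calc y * c * y * c⁻¹ = (y * c) * (y * c⁻¹) := by rw [mul_assoc]
          _ = (y * y) * (c * c⁻¹) := mul_mul_mul_comm y c y c⁻¹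
          _ = y ^ 2 := by rw [mul_inv_cancel, mul_one, sq]
      rw [this, hy2]
  let φ : PresentedGroup (relsE g) →* Multiplicative (ZMod n) := PresentedGroup.toGroup hrels
  have hφρ : φ (GE.ρ g) = y := by
    show φ (PresentedGroup.of none) = y
    rw [PresentedGroup.toGroup.of]
    simp [hf]
  have hρne : GE.ρ g ≠ 1 := by
    intro h
    have : y = 1 := by rw [← hφρ, h]; exact map_one φ
    rw [hy] at this
    have h0 : ((((g-1)*g : ℕ)) : ZMod n) = 0 := by
      have := congrArg Multiplicative.toAdd this
      simpa using this
    rw [ZMod.natCast_eq_zero_iff] at h0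
    have := Nat.le_of_dvd hpos h0
    omega
  haveI : Fact (Nat.Prime 2) := ⟨Nat.prime_two⟩
  have hord : orderOf (GE.ρ g) = 2 := orderOf_eq_prime (GE.rho_sq g) hρne
  refine ⟨hρne, hord, fun ho => ?_⟩
  rw [GE.prod_pow g ho]
  exact ⟨GE.rho_central g, hρne, hord⟩
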